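/- arXiv:2111.14476 — 6 statements merged into one kernel-verified Lean document; each statement's English description precedes it below -/
import Mathlib

section
/- There do not exist five distinct points p₁, p₂, p₃, p₄, p₅ of ℂ × ℝ whose pairwise Korányi distances are all equal to 1. -/
open Complex Real

/-- The Korányi (Heisenberg) distance on ℂ × ℝ. -/
noncomputable def kd (p q : ℂ × ℝ) : ℝ :=
  (‖p.1 - q.1‖ ^ 4 +
    (p.2 - q.2 + 2 * (p.1 * (starRingEnd ℂ) q.1).im) ^ 2) ^ ((1 : ℝ) / 4)

/-! ### Auxiliary constructions

We lift each point `p = (z,t)` of the Heisenberg group to a null vector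
`lf p = (1 + a, 1 - a, 2z)` (where `a = |z|² - i t`) for the Hermitian form of
signature `(1,2)` given by `⟨v,w⟩ = v₀ w̄₀ - v₁ w̄₁ - v₂ w̄₂`, and we add a sixth
null vector `inftyv = (1,-1,0)` representing the point at infinity.  The key facts
are that `⟨v,v⟩ = 0` for each of the six vectors and `|⟨v,w⟩|² = 4·kd⁴ = 4` for each
pair.  A Gram/inertia (trace-form) argument then yields a contradiction: choosing a
nonzero real vector `c` orthogonal to five explicit linear conditions, the quantity
`∑ c_i c_j |⟨v_i,v_j⟩|²` equals `-4∑ c_i²` but is also a sum of nonnegative terms. -/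

noncomputable def av (p : ℂ × ℝ) : ℂ := (Complex.normSq p.1 : ℝ) - p.2 * Complex.I

noncomputable def lf (p : ℂ × ℝ) : Fin 3 → ℂ := ![1 + av p, 1 - av p, 2 * p.1]

noncomputable def inftyv : Fin 3 → ℂ := ![1, -1, 0]

noncomputable def eps : Fin 3 → ℝ := ![1, -1, -1]

noncomputable def Hm (v w : Fin 3 → ℂ) : ℂ :=
  ∑ a : Fin 3, (eps a : ℂ) * v a * (starRingEnd ℂ) (w a)

noncomputable def Sm (P : Fin 6 → Fin 3 → ℂ) (c : Fin 6 → ℝ) (a b : Fin 3) : ℂ :=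
  ∑ i : Fin 6, (c i : ℂ) * (P i a * (starRingEnd ℂ) (P i b))

set_option maxHeartbeats 4000000 in
lemma key_id (P : Fin 6 → Fin 3 → ℂ) (c : Fin 6 → ℝ) :
    ∑ i : Fin 6, ∑ j : Fin 6, ((c i : ℂ) * (c j : ℂ)) *
      (Hm (P i) (P j) * (starRingEnd ℂ) (Hm (P i) (P j)))
    = ∑ a : Fin 3, ∑ b : Fin 3, ((eps a : ℂ) * (eps b : ℂ)) *
      (Sm P c a b * (starRingEnd ℂ) (Sm P c a b)) := by
  simp only [Hm, Sm, Fin.sum_univ_six, Fin.sum_univ_three]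
  simp only [map_add, map_mul, Complex.conj_conj, Complex.conj_ofReal]
  ring

lemma kd_one {p q : ℂ × ℝ} (h : kd p q = 1) :
    Complex.normSq (p.1 - q.1) ^ 2 + (p.2 - q.2 + 2 * (p.1 * (starRingEnd ℂ) q.1).im) ^ 2 = 1 := by
  have h0 : (0:ℝ) ≤ ‖p.1 - q.1‖ ^ 4 +
      (p.2 - q.2 + 2 * (p.1 * (starRingEnd ℂ) q.1).im) ^ 2 := by positivity
  have h1 : (‖p.1 - q.1‖ ^ 4 +
      (p.2 - q.2 + 2 * (p.1 * (starRingEnd ℂ) q.1).im) ^ 2) = 1 := by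
    have := congrArg (fun x : ℝ => x ^ (4:ℝ)) h
    simp only [kd] at this
    rwa [← Real.rpow_mul h0, one_div, inv_mul_cancel₀ (by norm_num), Real.rpow_one,
      Real.one_rpow] at this
  calc Complex.normSq (p.1 - q.1) ^ 2 + (p.2 - q.2 + 2 * (p.1 * (starRingEnd ℂ) q.1).im) ^ 2
      = ‖p.1 - q.1‖ ^ 4 + (p.2 - q.2 + 2 * (p.1 * (starRingEnd ℂ) q.1).im) ^ 2 := by
        rw [← Complex.sq_norm]; ring
    _ = 1 := h1

lemma Hm_self (p : ℂ × ℝ) : Hm (lf p) (lf p) = 0 := by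
  simp only [Hm, lf, av, eps, Fin.sum_univ_three, Matrix.cons_val_zero, Matrix.cons_val_one,
    Matrix.head_cons, Matrix.cons_val_two, Matrix.tail_cons]
  simp only [map_add, map_sub, map_mul, map_one, Complex.conj_ofReal, Complex.conj_I]
  push_cast
  rw [Complex.ext_iff]
  constructor <;>
  · simp [Complex.normSq_apply, Complex.add_re, Complex.add_im, Complex.mul_re, Complex.mul_im]
    ring

lemma Hm_inf_inf : Hm inftyv inftyv = 0 := by
  simp [Hm, inftyv, eps, Fin.sum_univ_three]

lemma Hm_lf_inf (p : ℂ × ℝ) :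
    Hm (lf p) inftyv * (starRingEnd ℂ) (Hm (lf p) inftyv) = 4 := by
  have : Hm (lf p) inftyv = 2 := by
    simp [Hm, lf, inftyv, eps, Fin.sum_univ_three]
    ring
  rw [this]
  norm_num [Complex.conj_ofNat]

lemma Hm_inf_lf (p : ℂ × ℝ) :
    Hm inftyv (lf p) * (starRingEnd ℂ) (Hm inftyv (lf p)) = 4 := by
  have : Hm inftyv (lf p) = 2 := by
    simp [Hm, lf, inftyv, eps, Fin.sum_univ_three, map_add, map_sub, map_mul,
      Complex.conj_ofReal, Complex.conj_I]
    ring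
  rw [this]
  norm_num [Complex.conj_ofNat]

lemma Hm_pair {p q : ℂ × ℝ} (h : kd p q = 1) :
    Hm (lf p) (lf q) * (starRingEnd ℂ) (Hm (lf p) (lf q)) = 4 := by
  have h1 := kd_one h
  simp only [Complex.normSq_apply, Complex.sub_re, Complex.sub_im, Complex.mul_im,
    Complex.conj_re, Complex.conj_im] at h1
  simp only [Hm, lf, av, eps, Fin.sum_univ_three, Matrix.cons_val_zero, Matrix.cons_val_one,
    Matrix.head_cons, Matrix.cons_val_two, Matrix.tail_cons]
  simp only [map_add, map_sub, map_mul, map_one, map_ofNat, map_neg, Complex.conj_ofReal,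
    Complex.conj_I, Complex.conj_conj]
  rw [Complex.ext_iff]
  constructor
  · simp only [Complex.normSq_apply, Complex.add_re, Complex.add_im, Complex.sub_re,
      Complex.sub_im, Complex.mul_re, Complex.mul_im, Complex.one_re, Complex.one_im,
      Complex.ofReal_re, Complex.ofReal_im, Complex.I_re, Complex.I_im, Complex.neg_re,
      Complex.neg_im, Complex.re_ofNat, Complex.im_ofNat, Complex.conj_re, Complex.conj_im]
    linear_combination (4:ℝ) * h1
  · simp only [Complex.normSq_apply, Complex.add_re, Complex.add_im, Complex.sub_re,
      Complex.sub_im, Complex.mul_re, Complex.mul_im, Complex.one_re, Complex.one_im,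
      Complex.ofReal_re, Complex.ofReal_im, Complex.I_re, Complex.I_im, Complex.neg_re,
      Complex.neg_im, Complex.re_ofNat, Complex.im_ofNat, Complex.conj_re, Complex.conj_im]
    ring

lemma Hm_pair' {p q : ℂ × ℝ} (h : kd p q = 1) :
    Hm (lf q) (lf p) * (starRingEnd ℂ) (Hm (lf q) (lf p)) = 4 := by
  have h1 := kd_one h
  simp only [Complex.normSq_apply, Complex.sub_re, Complex.sub_im, Complex.mul_im,
    Complex.conj_re, Complex.conj_im] at h1
  simp only [Hm, lf, av, eps, Fin.sum_univ_three, Matrix.cons_val_zero, Matrix.cons_val_one,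
    Matrix.head_cons, Matrix.cons_val_two, Matrix.tail_cons]
  simp only [map_add, map_sub, map_mul, map_one, map_ofNat, map_neg, Complex.conj_ofReal,
    Complex.conj_I, Complex.conj_conj]
  rw [Complex.ext_iff]
  constructor
  · simp only [Complex.normSq_apply, Complex.add_re, Complex.add_im, Complex.sub_re,
      Complex.sub_im, Complex.mul_re, Complex.mul_im, Complex.one_re, Complex.one_im,
      Complex.ofReal_re, Complex.ofReal_im, Complex.I_re, Complex.I_im, Complex.neg_re,
      Complex.neg_im, Complex.re_ofNat, Complex.im_ofNat, Complex.conj_re, Complex.conj_im]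
    linear_combination (4:ℝ) * h1
  · simp only [Complex.normSq_apply, Complex.add_re, Complex.add_im, Complex.sub_re,
      Complex.sub_im, Complex.mul_re, Complex.mul_im, Complex.one_re, Complex.one_im,
      Complex.ofReal_re, Complex.ofReal_im, Complex.I_re, Complex.I_im, Complex.neg_re,
      Complex.neg_im, Complex.re_ofNat, Complex.im_ofNat, Complex.conj_re, Complex.conj_im]
    ring

theorem no_five_equilateral_points :
    ¬ ∃ p₁ p₂ p₃ p₄ p₅ : ℂ × ℝ,
      p₁ ≠ p₂ ∧ p₁ ≠ p₃ ∧ p₁ ≠ p₄ ∧ p₁ ≠ p₅ ∧ p₂ ≠ p₃ ∧ p₂ ≠ p₄ ∧ p₂ ≠ p₅ ∧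
      p₃ ≠ p₄ ∧ p₃ ≠ p₅ ∧ p₄ ≠ p₅ ∧
      kd p₁ p₂ = 1 ∧ kd p₁ p₃ = 1 ∧ kd p₁ p₄ = 1 ∧ kd p₁ p₅ = 1 ∧
      kd p₂ p₃ = 1 ∧ kd p₂ p₄ = 1 ∧ kd p₂ p₅ = 1 ∧
      kd p₃ p₄ = 1 ∧ kd p₃ p₅ = 1 ∧ kd p₄ p₅ = 1 := by
  rintro ⟨p₁, p₂, p₃, p₄, p₅, -, -, -, -, -, -, -, -, -, -,
    h12, h13, h14, h15, h23, h24, h25, h34, h35, h45⟩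
  -- the six null vectors
  set Pv : Fin 6 → Fin 3 → ℂ := ![lf p₁, lf p₂, lf p₃, lf p₄, lf p₅, inftyv] with hPv
  -- the 5×6 real matrix of linear conditions
  set M : Matrix (Fin 5) (Fin 6) ℝ := fun k i =>
    ![ (1:ℝ), (Pv i 0 * (starRingEnd ℂ) (Pv i 1)).re, (Pv i 0 * (starRingEnd ℂ) (Pv i 1)).im,
       (Pv i 0 * (starRingEnd ℂ) (Pv i 2)).re, (Pv i 0 * (starRingEnd ℂ) (Pv i 2)).im ] k
    with hM
  have hnoinj : ¬ Function.Injective M.mulVecLin := by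
    intro hinj
    have hle := LinearMap.finrank_le_finrank_of_injective hinj
    rw [Module.finrank_pi, Module.finrank_pi] at hle
    simp at hle
  obtain ⟨x, y, hxy, hne⟩ := Function.not_injective_iff.mp hnoinj
  set c : Fin 6 → ℝ := x - y with hc
  have hc0 : M.mulVec c = 0 := by
    have : M.mulVecLin c = 0 := by
      rw [hc, map_sub, hxy, sub_self]
    simpa [Matrix.mulVecLin] using this
  have hcne : c ≠ 0 := sub_ne_zero.mpr hne
  -- extract the five scalar conditions
  have hrow : ∀ k : Fin 5, ∑ i : Fin 6, M k i * c i = 0 := by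
    intro k
    have := congrFun hc0 k
    simpa [Matrix.mulVec, dotProduct] using this
  have hsum : ∑ i : Fin 6, c i = 0 := by
    have := hrow 0
    simpa [hM] using this
  have hS01 : Sm Pv c 0 1 = 0 := by
    rw [Complex.ext_iff]
    constructor
    · have := hrow 1
      simp only [hM, Matrix.cons_val_one, Matrix.head_cons] at this
      rw [Sm, Complex.re_sum]
      simpa [Complex.re_ofReal_mul, mul_comm] using this
    · have := hrow 2
      simp only [hM] at this
      rw [Sm, Complex.im_sum]
      simpa [Complex.im_ofReal_mul, mul_comm] using this
  have hS02 : Sm Pv c 0 2 = 0 := by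
    rw [Complex.ext_iff]
    constructor
    · have := hrow 3
      simp only [hM] at this
      rw [Sm, Complex.re_sum]
      simpa [Complex.re_ofReal_mul, mul_comm] using this
    · have := hrow 4
      simp only [hM] at this
      rw [Sm, Complex.im_sum]
      simpa [Complex.im_ofReal_mul, mul_comm] using this
  have hconjS : ∀ a b : Fin 3, Sm Pv c b a = (starRingEnd ℂ) (Sm Pv c a b) := by
    intro a b
    rw [Sm, Sm, map_sum]
    refine Finset.sum_congr rfl fun i _ => ?_
    simp only [map_mul, Complex.conj_ofReal, Complex.conj_conj]
    ring
  have hS10 : Sm Pv c 1 0 = 0 := by rw [hconjS 0 1, hS01, map_zero]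
  have hS20 : Sm Pv c 2 0 = 0 := by rw [hconjS 0 2, hS02, map_zero]
  -- the main identity
  have main := key_id Pv c
  -- evaluate the left-hand side entrywise
  have e0 : Pv 0 = lf p₁ := rfl
  have e1 : Pv 1 = lf p₂ := rfl
  have e2 : Pv 2 = lf p₃ := rfl
  have e3 : Pv 3 = lf p₄ := rfl
  have e4 : Pv 4 = lf p₅ := rfl
  have e5 : Pv 5 = inftyv := rfl
  rw [Fin.sum_univ_six] at main
  simp only [Fin.sum_univ_six, e0, e1, e2, e3, e4, e5] at main
  rw [Hm_self p₁, Hm_self p₂, Hm_self p₃, Hm_self p₄, Hm_self p₅, Hm_inf_inf,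
    Hm_pair h12, Hm_pair h13, Hm_pair h14, Hm_pair h15, Hm_pair h23, Hm_pair h24,
    Hm_pair h25, Hm_pair h34, Hm_pair h35, Hm_pair h45,
    Hm_pair' h12, Hm_pair' h13, Hm_pair' h14, Hm_pair' h15, Hm_pair' h23, Hm_pair' h24,
    Hm_pair' h25, Hm_pair' h34, Hm_pair' h35, Hm_pair' h45,
    Hm_lf_inf p₁, Hm_lf_inf p₂, Hm_lf_inf p₃, Hm_lf_inf p₄, Hm_lf_inf p₅,
    Hm_inf_lf p₁, Hm_inf_lf p₂, Hm_inf_lf p₃, Hm_inf_lf p₄, Hm_inf_lf p₅] at main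
  -- evaluate the right-hand side
  rw [Fin.sum_univ_three] at main
  simp only [Fin.sum_univ_three] at main
  rw [hS01, hS02, hS10, hS20] at main
  simp only [eps, Matrix.cons_val_zero, Matrix.cons_val_one, Matrix.head_cons,
    Matrix.cons_val_two, Matrix.tail_cons, Complex.mul_conj] at main
  push_cast at main
  norm_num at main
  -- pass to a real equation
  have mainr : c 0 * c 1 * 4 + c 0 * c 2 * 4 + c 0 * c 3 * 4 + c 0 * c 4 * 4 + c 0 * c 5 * 4 +
      (c 1 * c 0 * 4 + c 1 * c 2 * 4 + c 1 * c 3 * 4 + c 1 * c 4 * 4 + c 1 * c 5 * 4) +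
      (c 2 * c 0 * 4 + c 2 * c 1 * 4 + c 2 * c 3 * 4 + c 2 * c 4 * 4 + c 2 * c 5 * 4) +
      (c 3 * c 0 * 4 + c 3 * c 1 * 4 + c 3 * c 2 * 4 + c 3 * c 4 * 4 + c 3 * c 5 * 4) +
      (c 4 * c 0 * 4 + c 4 * c 1 * 4 + c 4 * c 2 * 4 + c 4 * c 3 * 4 + c 4 * c 5 * 4) +
      (c 5 * c 0 * 4 + c 5 * c 1 * 4 + c 5 * c 2 * 4 + c 5 * c 3 * 4 + c 5 * c 4 * 4) =
      Complex.normSq (Sm Pv c 0 0) + (Complex.normSq (Sm Pv c 1 1) + Complex.normSq (Sm Pv c 1 2)) +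
      (Complex.normSq (Sm Pv c 2 1) + Complex.normSq (Sm Pv c 2 2)) := by
    exact_mod_cast main
  have hsum6 : c 0 + c 1 + c 2 + c 3 + c 4 + c 5 = 0 := by
    simpa [Fin.sum_univ_six] using hsum
  have hT : c 0 ^ 2 + c 1 ^ 2 + c 2 ^ 2 + c 3 ^ 2 + c 4 ^ 2 + c 5 ^ 2 =
      -(Complex.normSq (Sm Pv c 0 0) + (Complex.normSq (Sm Pv c 1 1) + Complex.normSq (Sm Pv c 1 2)) +
        (Complex.normSq (Sm Pv c 2 1) + Complex.normSq (Sm Pv c 2 2))) / 4 := by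
    linear_combination hsum6 * (c 0 + c 1 + c 2 + c 3 + c 4 + c 5) - mainr / 4
  have hTle : c 0 ^ 2 + c 1 ^ 2 + c 2 ^ 2 + c 3 ^ 2 + c 4 ^ 2 + c 5 ^ 2 ≤ 0 := by
    rw [hT]
    have n0 := Complex.normSq_nonneg (Sm Pv c 0 0)
    have n1 := Complex.normSq_nonneg (Sm Pv c 1 1)
    have n2 := Complex.normSq_nonneg (Sm Pv c 1 2)
    have n3 := Complex.normSq_nonneg (Sm Pv c 2 1)
    have n4 := Complex.normSq_nonneg (Sm Pv c 2 2)
    linarith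
  have hsumsq : ∑ i : Fin 6, c i ^ 2 = 0 := by
    refine le_antisymm ?_ (Finset.sum_nonneg fun i _ => sq_nonneg _)
    rw [Fin.sum_univ_six]
    linarith
  have hzero : ∀ i : Fin 6, c i = 0 := by
    intro i
    have := (Finset.sum_eq_zero_iff_of_nonneg (fun j _ => sq_nonneg (c j))).mp hsumsq i
      (Finset.mem_univ i)
    exact pow_eq_zero_iff (by norm_num) |>.mp this
  exact hcne (funext hzero)
end

section
/- Let r > 0 and let θ₁, θ₂, θ₃ be angles giving three distinct points pⱼ = (r·e^{iθⱼ}, 0), j = 1, 2, 3, of ℂ × ℝ. If the three pairwise Korányi distances d(p₁,p₂), d(p₂,p₃), d(p₁,p₃) are all equal to 1, then r = 12^(−1/4). -/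
open Complex Real

lemma kd_circle (r α β : ℝ) :
    kd ((r : ℂ) * Complex.exp (α * Complex.I), 0) ((r : ℂ) * Complex.exp (β * Complex.I), 0)
      = (8 * r ^ 4 * (1 - Real.cos (α - β))) ^ ((1 : ℝ) / 4) := by
  unfold kd
  have h4 : ∀ z : ℂ, ‖z‖ ^ 4 = Complex.normSq z ^ 2 := by
    intro z
    rw [show (4:ℕ) = 2*2 by rfl, pow_mul, Complex.sq_norm]
  simp only [h4, Complex.exp_mul_I, Complex.normSq_apply]
  congr 1
  simp only [Complex.mul_re, Complex.mul_im, Real.cos_sub, Complex.cos_ofReal_re,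
    Complex.sin_ofReal_re, Complex.cos_ofReal_im, Complex.sin_ofReal_im,
    Complex.ofReal_re, Complex.ofReal_im, Complex.add_re, Complex.add_im,
    Complex.sub_re, Complex.sub_im, Complex.mul_I_re, Complex.mul_I_im,
    Complex.I_re, Complex.I_im, Complex.conj_re, Complex.conj_im, Prod.fst, Prod.snd]
  set sa := Real.sin α
  set ca := Real.cos α
  set sb := Real.sin β
  set cb := Real.cos β
  have pa : sa ^ 2 + ca ^ 2 = 1 := Real.sin_sq_add_cos_sq α
  have pb : sb ^ 2 + cb ^ 2 = 1 := Real.sin_sq_add_cos_sq β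
  ring_nf
  linear_combination (r^4*((sa^2+ca^2-1)+(sb^2+cb^2-1)+8-4*(ca*cb+sa*sb)+4*(sb^2+cb^2-1))) * pa
    + (r^4*((sa^2+ca^2-1)+(sb^2+cb^2-1)+8-4*(ca*cb+sa*sb))) * pb

lemma pow_four_eq_of_kd_eq_one {X : ℝ} (hX : 0 ≤ X) (h : X ^ ((1:ℝ)/4) = 1) : X = 1 := by
  have := congrArg (fun y : ℝ => y ^ (4:ℝ)) h
  rw [← Real.rpow_mul hX] at this
  norm_num at this
  exact this

lemma exp_eq_of_cos_eq_one {α β : ℝ} (h : Real.cos (α - β) = 1) :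
    Complex.exp (α * Complex.I) = Complex.exp (β * Complex.I) := by
  have hs : Real.sin (α - β) = 0 := by
    have := Real.sin_sq_add_cos_sq (α - β)
    nlinarith
  have : Complex.exp ((α - β) * Complex.I) = 1 := by
    rw [Complex.exp_mul_I, show (↑α - ↑β : ℂ) = ((α - β : ℝ) : ℂ) by push_cast; ring,
      ← Complex.ofReal_cos, ← Complex.ofReal_sin, hs, h]
    simp
  calc Complex.exp (α * Complex.I)
      = Complex.exp (β * Complex.I) * Complex.exp ((α - β) * Complex.I) := by
        rw [← Complex.exp_add]; ring_nf
    _ = Complex.exp (β * Complex.I) := by rw [this, mul_one]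

theorem equilateral_triple_on_planar_circle_radius (r : ℝ) (hr : 0 < r)
    (θ₁ θ₂ θ₃ : ℝ)
    (p₁ p₂ p₃ : ℂ × ℝ)
    (hp₁ : p₁ = ((r : ℂ) * Complex.exp (θ₁ * Complex.I), 0))
    (hp₂ : p₂ = ((r : ℂ) * Complex.exp (θ₂ * Complex.I), 0))
    (hp₃ : p₃ = ((r : ℂ) * Complex.exp (θ₃ * Complex.I), 0))
    (hne₁₂ : p₁ ≠ p₂) (hne₁₃ : p₁ ≠ p₃) (hne₂₃ : p₂ ≠ p₃)
    (hd₁₂ : kd p₁ p₂ = 1) (hd₂₃ : kd p₂ p₃ = 1) (hd₁₃ : kd p₁ p₃ = 1) :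
    r = (12 : ℝ) ^ (-(1 : ℝ) / 4) := by
  subst hp₁ hp₂ hp₃
  have hr4 : (0:ℝ) < r ^ 4 := by positivity
  have key : ∀ α β : ℝ,
      kd ((r : ℂ) * Complex.exp (α * Complex.I), 0) ((r : ℂ) * Complex.exp (β * Complex.I), 0) = 1
      → 8 * r ^ 4 * (1 - Real.cos (α - β)) = 1 := by
    intro α β h
    rw [kd_circle] at h
    apply pow_four_eq_of_kd_eq_one _ h
    nlinarith [Real.cos_le_one (α - β)]
  have h12 := key _ _ hd₁₂
  have h23 := key _ _ hd₂₃
  have h13 := key _ _ hd₁₃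
  have hcne : Real.cos (θ₁ - θ₂) ≠ 1 := by
    intro h
    exact hne₁₂ (by rw [exp_eq_of_cos_eq_one h])
  set ca := Real.cos (θ₁ - θ₂) with hca
  set cb := Real.cos (θ₂ - θ₃) with hcb
  have hsum : θ₁ - θ₃ = (θ₁ - θ₂) + (θ₂ - θ₃) := by ring
  rw [hsum, Real.cos_add] at h13
  set sa := Real.sin (θ₁ - θ₂)
  set sb := Real.sin (θ₂ - θ₃)
  have pa : sa ^ 2 + ca ^ 2 = 1 := Real.sin_sq_add_cos_sq _
  have pb : sb ^ 2 + cb ^ 2 = 1 := Real.sin_sq_add_cos_sq _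
  -- ca = cb
  have hcc : ca = cb := by nlinarith
  -- sa * sb = ca^2 - ca
  have hss : sa * sb = ca * cb - ca := by nlinarith
  have hfac : (2 * ca + 1) * (ca - 1) ^ 2 = 0 := by
    linear_combination (sa*sb+ca*cb-ca)*hss + (cb^2-1)*pa + (-sa^2)*pb + (2*ca^2-cb-ca)*hcc
  have hca2 : ca = -(1/2) := by
    rcases mul_eq_zero.mp hfac with h | h
    · linarith
    · exfalso; exact hcne (by nlinarith [sq_nonneg (ca - 1)])
  have hr12 : r ^ 4 = 1 / 12 := by rw [hca2] at h12; linarith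
  -- conclude
  have step : r = ((r ^ 4 : ℝ)) ^ ((1:ℝ)/4) := by
    rw [← Real.rpow_natCast r 4, ← Real.rpow_mul hr.le]
    norm_num
  rw [step, hr12, show (1/12 : ℝ) = (12:ℝ)⁻¹ by norm_num,
    Real.inv_rpow (by norm_num : (0:ℝ) ≤ 12), ← Real.rpow_neg (by norm_num : (0:ℝ) ≤ 12)]
  norm_num
end

section
/- Let r₀ = 12^(−1/4) and S₃ = {(r₀, 0), (r₀·e^{2πi/3}, 0), (r₀·e^{−2πi/3}, 0)} ⊆ ℂ × ℝ. Every set S ⊆ ℂ × ℝ containing S₃ whose distinct points are pairwise at Korányi distance 1 has at most 4 elements. -/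
open Complex Real

lemma kd_eq_one_iff' (p q : ℂ × ℝ) : kd p q = 1 ↔
    ((p.1.re - q.1.re)^2 + (p.1.im - q.1.im)^2)^2 +
      (p.2 - q.2 + 2*(p.1.im * q.1.re - p.1.re * q.1.im))^2 = 1 := by
  have habs : ‖p.1 - q.1‖^4 = ((p.1.re - q.1.re)^2 + (p.1.im - q.1.im)^2)^2 := by
    rw [show (4:ℕ) = 2*2 from rfl, pow_mul, Complex.sq_norm, Complex.normSq_apply]
    simp only [Complex.sub_re, Complex.sub_im]
    ring
  have him : (p.1 * (starRingEnd ℂ) q.1).im = p.1.im * q.1.re - p.1.re * q.1.im := by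
    simp [Complex.mul_im]
    ring
  unfold kd
  rw [habs, him]
  set X := ((p.1.re - q.1.re)^2 + (p.1.im - q.1.im)^2)^2 +
      (p.2 - q.2 + 2*(p.1.im * q.1.re - p.1.re * q.1.im))^2 with hXdef
  have hX : 0 ≤ X := by positivity
  constructor
  · intro h
    have h4 : (X ^ ((1:ℝ)/4)) ^ (4:ℝ) = X := by
      rw [← Real.rpow_mul hX]; norm_num
    rw [h, Real.one_rpow] at h4
    exact h4.symm
  · intro h
    rw [h, Real.one_rpow]

lemma key' (x y t r c : ℝ) (hr : 0 < r) (hr4 : r^4 = 1/12) (hcpos : 0 < c) (hc : c^2 = 3/4)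
    (h0 : ((x - r)^2 + y^2)^2 + (t + 2*(y*r))^2 = 1)
    (h1 : ((x + r/2)^2 + (y - r*c)^2)^2 + (t + 2*(y*(-(r/2)) - x*(r*c)))^2 = 1)
    (h2 : ((x + r/2)^2 + (y + r*c)^2)^2 + (t + 2*(y*(-(r/2)) + x*(r*c)))^2 = 1) :
    x = 0 ∧ y = 0 ∧ t^2 = 11/12 := by
  have hA : (x^2+y^2+r^2)^2 + 4*(x^2+y^2)*r^2 + t^2 = 1 := by
    linear_combination (h0 + h1 + h2)/3 - (8*(x^2+y^2)*r^2/3) * hc + ((-4/3)*(x*r^3 + x^2*r^2 + y^2*r^2) - (2/3)*r^4*(c^2+5/4)) * hc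
  have e0 : r * ((x^2+y^2+r^2)*x - t*y) = 0 := by
    linear_combination (hA - h0)/4
  have e1 : r*c*((x^2+y^2+r^2)*y + t*x) = 0 := by
    linear_combination (h2 - h1)/8 - (r^3*c*y) * hc
  have e0' : (x^2+y^2+r^2)*x - t*y = 0 := by
    rcases mul_eq_zero.mp e0 with h | h
    · exact absurd h hr.ne'
    · exact h
  have e1' : (x^2+y^2+r^2)*y + t*x = 0 := by
    rcases mul_eq_zero.mp e1 with h | h
    · rcases mul_eq_zero.mp h with h' | h'
      · exact absurd h' hr.ne'
      · exact absurd h' hcpos.ne'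
    · exact h
  have hpos : 0 < (x^2+y^2+r^2)^2 + t^2 := by
    nlinarith [sq_nonneg x, sq_nonneg y, sq_nonneg t, sq_nonneg (x^2+y^2), sq_nonneg r, hr]
  have hx : ((x^2+y^2+r^2)^2 + t^2) * x = 0 := by
    linear_combination (x^2+y^2+r^2)*e0' + t*e1'
  have hx0 : x = 0 := by
    rcases mul_eq_zero.mp hx with h | h
    · exact absurd h hpos.ne'
    · exact h
  have hy : ((x^2+y^2+r^2)^2 + t^2) * y = 0 := by
    linear_combination (x^2+y^2+r^2)*e1' - t*e0'
  have hy0 : y = 0 := by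
    rcases mul_eq_zero.mp hy with h | h
    · exact absurd h hpos.ne'
    · exact h
  refine ⟨hx0, hy0, ?_⟩
  subst hx0; subst hy0
  linear_combination hA - hr4

lemma encard_quad_le (a b c d : ℂ × ℝ) : ({a,b,c,d} : Set (ℂ × ℝ)).encard ≤ 4 := by
  calc ({a,b,c,d} : Set (ℂ × ℝ)).encard ≤ ({b,c,d} : Set (ℂ × ℝ)).encard + 1 :=
        Set.encard_insert_le _ _
    _ ≤ (({c,d} : Set (ℂ × ℝ)).encard + 1) + 1 := by gcongr; exact Set.encard_insert_le _ _
    _ ≤ ((({d} : Set (ℂ × ℝ)).encard + 1) + 1) + 1 := by gcongr; exact Set.encard_insert_le _ _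
    _ = 4 := by rw [Set.encard_singleton]; rfl

theorem equilateral_set_containing_canonical_three (S : Set (ℂ × ℝ))
    (hS₃ : let r₀ : ℝ := (12 : ℝ) ^ (-(1 : ℝ) / 4)
      ({((r₀ : ℂ), 0), ((r₀ : ℂ) * Complex.exp (2 * (Real.pi : ℂ) * Complex.I / 3), 0),
        ((r₀ : ℂ) * Complex.exp (-(2 * (Real.pi : ℂ) * Complex.I) / 3), 0)} : Set (ℂ × ℝ)) ⊆ S)
    (hS : ∀ p ∈ S, ∀ q ∈ S, p ≠ q → kd p q = 1) :
    S.encard ≤ 4 := by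
  classical
  set r : ℝ := (12 : ℝ) ^ (-(1 : ℝ) / 4) with hrdef
  set P0 : ℂ × ℝ := ((r : ℂ), 0) with hP0def
  set P1 : ℂ × ℝ := ((r : ℂ) * Complex.exp (2 * (Real.pi : ℂ) * Complex.I / 3), 0) with hP1def
  set P2 : ℂ × ℝ := ((r : ℂ) * Complex.exp (-(2 * (Real.pi : ℂ) * Complex.I) / 3), 0) with hP2def
  have hsub3 : ({P0, P1, P2} : Set (ℂ × ℝ)) ⊆ S := hS₃
  have hP0 : P0 ∈ S := hsub3 (Or.inl rfl)
  have hP1 : P1 ∈ S := hsub3 (Or.inr (Or.inl rfl))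
  have hP2 : P2 ∈ S := hsub3 (Or.inr (Or.inr rfl))
  have hr : 0 < r := Real.rpow_pos_of_pos (by norm_num) _
  have hr4 : r^4 = 1/12 := by
    rw [hrdef, ← Real.rpow_natCast ((12:ℝ) ^ (-(1:ℝ)/4)) 4, ← Real.rpow_mul (by norm_num : (0:ℝ) ≤ 12)]
    norm_num
  set c : ℝ := Real.sqrt 3 / 2 with hcdef
  have hcpos : 0 < c := by
    rw [hcdef]; positivity
  have hc : c^2 = 3/4 := by
    rw [hcdef, div_pow, Real.sq_sqrt (by norm_num : (0:ℝ) ≤ 3)]; norm_num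
  have hcos : Real.cos (2*Real.pi/3) = -(1/2) := by
    rw [show (2*Real.pi/3:ℝ) = Real.pi - Real.pi/3 by ring, Real.cos_pi_sub, Real.cos_pi_div_three]
  have hsin : Real.sin (2*Real.pi/3) = c := by
    rw [show (2*Real.pi/3:ℝ) = Real.pi - Real.pi/3 by ring, Real.sin_pi_sub, Real.sin_pi_div_three, hcdef]
  have earg1 : 2 * (Real.pi : ℂ) * Complex.I / 3 = ((2*Real.pi/3 : ℝ):ℂ) * Complex.I := by
    push_cast; ring
  have earg2 : -(2 * (Real.pi : ℂ) * Complex.I) / 3 = ((-(2*Real.pi/3) : ℝ):ℂ) * Complex.I := by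
    push_cast; ring
  have hP1re : (P1.1).re = r * (-(1/2)) := by
    rw [hP1def, earg1, Complex.re_ofReal_mul, Complex.exp_ofReal_mul_I_re, hcos]
  have hP1im : (P1.1).im = r * c := by
    rw [hP1def, earg1, Complex.im_ofReal_mul, Complex.exp_ofReal_mul_I_im, hsin]
  have hP2re : (P2.1).re = r * (-(1/2)) := by
    rw [hP2def, earg2, Complex.re_ofReal_mul, Complex.exp_ofReal_mul_I_re, Real.cos_neg, hcos]
  have hP2im : (P2.1).im = -(r * c) := by
    rw [hP2def, earg2, Complex.im_ofReal_mul, Complex.exp_ofReal_mul_I_im, Real.sin_neg, hsin]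
    ring
  have hP0re : (P0.1).re = r := by rw [hP0def]; exact Complex.ofReal_re r
  have hP0im : (P0.1).im = 0 := by rw [hP0def]; exact Complex.ofReal_im r
  set s : ℝ := Real.sqrt (11/12) with hsdef
  have hs2 : s^2 = 11/12 := Real.sq_sqrt (by norm_num)
  have hspos : 0 < s := Real.sqrt_pos.mpr (by norm_num)
  -- every point of S is one of five points
  have hsub : ∀ p ∈ S, p = P0 ∨ p = P1 ∨ p = P2 ∨ p = ((0:ℂ), s) ∨ p = ((0:ℂ), -s) := by
    intro p hp
    by_cases h0 : p = P0
    · exact Or.inl h0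
    by_cases h1 : p = P1
    · exact Or.inr (Or.inl h1)
    by_cases h2 : p = P2
    · exact Or.inr (Or.inr (Or.inl h2))
    refine Or.inr (Or.inr (Or.inr ?_))
    have k0 := (kd_eq_one_iff' p P0).mp (hS p hp P0 hP0 h0)
    have k1 := (kd_eq_one_iff' p P1).mp (hS p hp P1 hP1 h1)
    have k2 := (kd_eq_one_iff' p P2).mp (hS p hp P2 hP2 h2)
    rw [hP0re, hP0im] at k0
    rw [hP1re, hP1im] at k1
    rw [hP2re, hP2im] at k2
    have hP0snd : P0.2 = 0 := rfl
    have hP1snd : P1.2 = 0 := rfl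
    have hP2snd : P2.2 = 0 := rfl
    rw [hP0snd] at k0; rw [hP1snd] at k1; rw [hP2snd] at k2
    obtain ⟨hxre, hxim, ht⟩ := key' p.1.re p.1.im p.2 r c hr hr4 hcpos hc
      (by linear_combination k0) (by linear_combination k1) (by linear_combination k2)
    have hz : p.1 = 0 := Complex.ext (by simpa using hxre) (by simpa using hxim)
    have ht' : p.2^2 = s^2 := by rw [hs2]; exact ht
    rcases sq_eq_sq_iff_eq_or_eq_neg.mp ht' with h | h
    · left; exact Prod.ext hz h
    · right; exact Prod.ext hz h
  -- the two apexes cannot both belong to S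
  have haps : ¬ (((0:ℂ), s) ∈ S ∧ ((0:ℂ), -s) ∈ S) := by
    rintro ⟨ha, hb⟩
    have hne : ((0:ℂ), s) ≠ ((0:ℂ), -s) := by
      intro h
      have := congrArg Prod.snd h
      simp only at this
      linarith
    have := (kd_eq_one_iff' ((0:ℂ), s) ((0:ℂ), -s)).mp (hS _ ha _ hb hne)
    simp only [Complex.zero_re, Complex.zero_im] at this
    nlinarith [hs2]
  by_cases hbmem : ((0:ℂ), -s) ∈ S
  · have hsub' : S ⊆ ({P0, P1, P2, ((0:ℂ), -s)} : Set (ℂ × ℝ)) := by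
      intro p hp
      rcases hsub p hp with h | h | h | h | h
      · exact Or.inl h
      · exact Or.inr (Or.inl h)
      · exact Or.inr (Or.inr (Or.inl h))
      · exact absurd ⟨h ▸ hp, hbmem⟩ haps
      · exact Or.inr (Or.inr (Or.inr h))
    exact le_trans (Set.encard_mono hsub') (encard_quad_le _ _ _ _)
  · have hsub' : S ⊆ ({P0, P1, P2, ((0:ℂ), s)} : Set (ℂ × ℝ)) := by
      intro p hp
      rcases hsub p hp with h | h | h | h | h
      · exact Or.inl h
      · exact Or.inr (Or.inl h)
      · exact Or.inr (Or.inr (Or.inl h))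
      · exact Or.inr (Or.inr (Or.inr h))
      · exact absurd (h ▸ hp) hbmem
    exact le_trans (Set.encard_mono hsub') (encard_quad_le _ _ _ _)
end

section
/- A point (z, t) ∈ ℂ × ℝ is at Korányi distance 1 from both (0, −1/2) and (0, 1/2) if and only if t = 0 and |z| = (3/4)^(1/4). -/
open Complex Real

lemma rpow_quarter_eq_one {x : ℝ} (hx : 0 ≤ x) (h : x ^ ((1:ℝ)/4) = 1) : x = 1 := by
  have := congrArg (fun y : ℝ => y ^ (4:ℝ)) h
  simp only [← Real.rpow_natCast, ← Real.rpow_mul hx] at this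
  norm_num at this
  simpa [Real.rpow_natCast] using this

theorem equidistant_from_vertical_pair (z : ℂ) (t : ℝ) :
    (kd (z, t) ((0 : ℂ), (-1 / 2 : ℝ)) = 1 ∧ kd (z, t) ((0 : ℂ), (1 / 2 : ℝ)) = 1) ↔
      t = 0 ∧ ‖z‖ = (3 / 4 : ℝ) ^ ((1 : ℝ) / 4) := by
  simp only [kd, map_zero, mul_zero, sub_zero, Complex.zero_im, Complex.mul_im, add_zero]
  set a := ‖z‖ with ha
  have ha0 : 0 ≤ a := norm_nonneg z
  constructor
  · rintro ⟨h1, h2⟩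
    have e1 : a ^ 4 + (t - -1/2) ^ 2 = 1 :=
      rpow_quarter_eq_one (by positivity) h1
    have e2 : a ^ 4 + (t - 1/2) ^ 2 = 1 :=
      rpow_quarter_eq_one (by positivity) h2
    have ht : t = 0 := by nlinarith
    subst ht
    have ha4 : a ^ 4 = 3/4 := by nlinarith
    refine ⟨rfl, ?_⟩
    have : ((3:ℝ)/4) ^ ((1:ℝ)/4) = (a ^ (4:ℕ)) ^ ((1:ℝ)/4) := by rw [ha4]
    rw [this, ← Real.rpow_natCast a 4, ← Real.rpow_mul ha0]
    norm_num
  · rintro ⟨ht, hz⟩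
    subst ht
    have ha4 : a ^ 4 = 3/4 := by
      rw [hz, ← Real.rpow_natCast _ 4, ← Real.rpow_mul (by norm_num)]
      norm_num
    refine ⟨?_, ?_⟩ <;> · rw [ha4]; norm_num
end

section
/- Let (z, t) ∈ ℂ × ℝ satisfy |z|⁴ + t² = 1 and d((z,t), (1,0)) = 1, where d is the Korányi distance. Then |z|² ≥ 5/2 − √6. -/
open Complex Real

theorem normSq_lower_bound_on_curve (z : ℂ) (t : ℝ)
    (hsph : ‖z‖ ^ 4 + t ^ 2 = 1)
    (hd : kd (z, t) ((1 : ℂ), (0 : ℝ)) = 1) :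
    5 / 2 - Real.sqrt 6 ≤ ‖z‖ ^ 2 := by
  obtain ⟨x, y⟩ := z
  set z : ℂ := ⟨x, y⟩ with hz
  have hs : ‖z‖ ^ 2 = x ^ 2 + y ^ 2 := by
    rw [Complex.sq_norm, Complex.normSq_apply]; ring
  have hsph' : (x ^ 2 + y ^ 2) ^ 2 + t ^ 2 = 1 := by
    have : ‖z‖ ^ 4 = (‖z‖ ^ 2) ^ 2 := by ring
    rw [this, hs] at hsph; exact hsph
  -- extract the second sphere equation from hd
  have h0 : (0:ℝ) ≤ ‖z - 1‖ ^ 4 + (t - 0 + 2 * (z * (starRingEnd ℂ) 1).im) ^ 2 := by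
    positivity
  have h := congrArg (fun r : ℝ => r ^ (4:ℝ)) hd
  simp only [kd] at h
  rw [← Real.rpow_mul h0, Real.one_rpow] at h
  norm_num at h
  have habs : ‖z - 1‖ ^ 4 = ((x - 1) ^ 2 + y ^ 2) ^ 2 := by
    have : ‖z - 1‖ ^ 4 = (‖z - 1‖ ^ 2) ^ 2 := by ring
    rw [this, Complex.sq_norm, Complex.normSq_apply]
    simp [hz]
    ring
  rw [habs] at h
  have hE : ((x - 1) ^ 2 + y ^ 2) ^ 2 + (t + 2 * y) ^ 2 = 1 := h
  -- linear relation
  have hlin : 4 * x * (x ^ 2 + y ^ 2 + 1) - 4 * t * y = 6 * (x ^ 2 + y ^ 2) + 1 := by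
    linear_combination hsph' - hE
  have key : 32 * (x ^ 2 + y ^ 2) * ((x ^ 2 + y ^ 2) + 1) - (6 * (x ^ 2 + y ^ 2) + 1) ^ 2
      = (4 * (x ^ 2 + y ^ 2 + 1) * y + 4 * t * x) ^ 2 := by
    linear_combination (4 * x * (x ^ 2 + y ^ 2 + 1) - 4 * t * y + 6 * (x ^ 2 + y ^ 2) + 1) * hlin
      - 16 * (x ^ 2 + y ^ 2) * hsph'
  have hquad : 4 * (x ^ 2 + y ^ 2) ^ 2 - 20 * (x ^ 2 + y ^ 2) + 1 ≤ 0 := by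
    nlinarith [key, sq_nonneg (4 * (x ^ 2 + y ^ 2 + 1) * y + 4 * t * x)]
  have h1 : (5 - 2 * (x ^ 2 + y ^ 2)) ^ 2 ≤ 24 := by nlinarith [hquad]
  have h24 : Real.sqrt 24 = 2 * Real.sqrt 6 := by
    rw [show (24:ℝ) = 4 * 6 by norm_num, Real.sqrt_mul (by norm_num),
      show (4:ℝ) = 2 ^ 2 by norm_num, Real.sqrt_sq (by norm_num)]
  have h2 : 5 - 2 * (x ^ 2 + y ^ 2) ≤ Real.sqrt 24 := by
    calc 5 - 2 * (x ^ 2 + y ^ 2) ≤ |5 - 2 * (x ^ 2 + y ^ 2)| := le_abs_self _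
    _ = Real.sqrt ((5 - 2 * (x ^ 2 + y ^ 2)) ^ 2) := (Real.sqrt_sq_eq_abs _).symm
    _ ≤ Real.sqrt 24 := Real.sqrt_le_sqrt h1
  rw [hs]
  rw [h24] at h2
  linarith
end

section
/- Let p = (z, t) ∈ ℂ × ℝ satisfy |z|⁴ + t² = 1 and d(p, (1,0)) = 1, where d is the Korányi distance, and let j₁(p) = (conj(z), −t) be its antipodal point. Then 33 − 12√6 ≤ d(p, j₁(p))⁴ ≤ 15/4; equivalently (2√6 − 3)^(1/2) ≤ d(p, j₁(p)) ≤ (15/4)^(1/4). In particular d(p, j₁(p)) > 1. -/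
open Complex Real

set_option maxHeartbeats 1600000 in
lemma core_bounds_aux (x y t s : ℝ) (hs : s^2 = 6) (hs1 : 0 ≤ s)
    (hA : (x^2+y^2)^2 + t^2 = 1)
    (hB : ((x-1)^2+y^2)^2 + (t+2*y)^2 = 1) :
    33 - 12*s ≤ 16*y^4 + (2*t+4*x*y)^2 ∧ 16*y^4 + (2*t+4*x*y)^2 ≤ 15/4 := by
  have hs2 : 2 ≤ s := by nlinarith
  have hs3 : s ≤ 5/2 := by nlinarith
  have h1 : (0:ℝ) ≤ x^2+y^2 := by positivity
  have h2 : x^2+y^2 ≤ 1 := by nlinarith [sq_nonneg t, sq_nonneg (x^2+y^2+1)]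
  have hS : 6*(x^2+y^2)+1-4*x-4*x*(x^2+y^2) = -(4*y*t) := by
    linear_combination hB - hA
  have hW : (1+(x^2+y^2))*(8*x-6*(x^2+y^2)-1)^2
      = (1-(x^2+y^2))*(20*(x^2+y^2)-4*(x^2+y^2)^2-1) := by
    linear_combination (2*((6*(x^2+y^2)+1-4*x-4*x*(x^2+y^2)) - 4*y*t)) * hS + 32*y^2*hA
  have hQ : 16*y^4 + (2*t+4*x*y)^2 = 3 + 12*((x^2+y^2)-x)^2 + (2*x-1)^2 := by
    linear_combination 4*hA + 4*x*hS
  constructor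
  · -- lower bound
    have hvlb : 0 ≤ 2*(x^2+y^2) - 5 + 2*s := by
      by_contra hcon
      push_neg at hcon
      have hA1 : 0 < 5 - 2*s - 2*(x^2+y^2) := by linarith
      have hA2 : 0 < 5 + 2*s - 2*(x^2+y^2) := by linarith
      have hM : 0 < (5 - 2*s - 2*(x^2+y^2)) * (5 + 2*s - 2*(x^2+y^2)) := mul_pos hA1 hA2
      have hQneg : 20*(x^2+y^2)-4*(x^2+y^2)^2-1 < 0 := by nlinarith [hM, hs]
      have hu1 : (0:ℝ) < 1 - (x^2+y^2) := by linarith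
      have hrhs : (1-(x^2+y^2))*(20*(x^2+y^2)-4*(x^2+y^2)^2-1) < 0 :=
        mul_neg_of_pos_of_neg hu1 hQneg
      have hlhs : 0 ≤ (1+(x^2+y^2))*(8*x-6*(x^2+y^2)-1)^2 := by positivity
      linarith [hW]
    have key2 : 4*(1+(x^2+y^2))*(12*((x^2+y^2)-x)^2 + (2*x-1)^2) - 4*(1+(x^2+y^2))*(30-12*s)
        = 2*(2*(x^2+y^2)+1-s)^2*(2*(x^2+y^2)-5+2*s) := by
      linear_combination hW - 2*(2*s-6*(x^2+y^2)-9)*hs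
    have hnn : 0 ≤ 2*(2*(x^2+y^2)+1-s)^2*(2*(x^2+y^2)-5+2*s) := by positivity
    nlinarith [key2, hnn, hQ, h1]
  · -- upper bound
    have key : (1+(x^2+y^2))*(15/4 - (16*y^4 + (2*t+4*x*y)^2))
        = (1/4)*(1-(x^2+y^2))*(4*(x^2+y^2)-1)^2 := by
      linear_combination (-(1+(x^2+y^2)))*hQ - (1/4)*hW
    nlinarith [key, mul_nonneg (by linarith : (0:ℝ) ≤ 1-(x^2+y^2)) (sq_nonneg (4*(x^2+y^2)-1)), h1]

lemma kd_pow4 (p q : ℂ × ℝ) :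
    (kd p q) ^ 4 = ‖p.1 - q.1‖ ^ 4 +
      (p.2 - q.2 + 2 * (p.1 * (starRingEnd ℂ) q.1).im) ^ 2 := by
  have hE : (0:ℝ) ≤ ‖p.1 - q.1‖ ^ 4 +
      (p.2 - q.2 + 2 * (p.1 * (starRingEnd ℂ) q.1).im) ^ 2 := by positivity
  unfold kd
  rw [← Real.rpow_natCast (_ ^ ((1:ℝ)/4)) 4, ← Real.rpow_mul hE]
  norm_num

lemma kd_nonneg (p q : ℂ × ℝ) : 0 ≤ kd p q := by
  unfold kd
  positivity

lemma abs_pow4 (w : ℂ) : ‖w‖^4 = (w.re^2 + w.im^2)^2 := by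
  have h : ‖w‖^4 = (‖w‖^2)^2 := by ring
  rw [h, Complex.sq_norm, Complex.normSq_apply]
  ring

theorem antipodal_distance_bounds (z : ℂ) (t : ℝ)
    (hsph : ‖z‖ ^ 4 + t ^ 2 = 1)
    (hd : kd (z, t) ((1 : ℂ), (0 : ℝ)) = 1) :
    (33 - 12 * Real.sqrt 6 ≤ (kd (z, t) ((starRingEnd ℂ) z, -t)) ^ 4 ∧
      (kd (z, t) ((starRingEnd ℂ) z, -t)) ^ 4 ≤ 15 / 4) ∧
    ((2 * Real.sqrt 6 - 3) ^ ((1 : ℝ) / 2) ≤ kd (z, t) ((starRingEnd ℂ) z, -t) ∧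
      kd (z, t) ((starRingEnd ℂ) z, -t) ≤ (15 / 4 : ℝ) ^ ((1 : ℝ) / 4)) ∧
    1 < kd (z, t) ((starRingEnd ℂ) z, -t) := by
  set s := Real.sqrt 6 with hsdef
  have hs : s^2 = 6 := Real.sq_sqrt (by norm_num)
  have hs1 : (0:ℝ) ≤ s := Real.sqrt_nonneg 6
  have hs2 : 2 ≤ s := by nlinarith
  have hs3 : s ≤ 5/2 := by nlinarith
  -- constraint A in coordinates
  have hA : (z.re^2+z.im^2)^2 + t^2 = 1 := by
    rw [← abs_pow4]; exact hsph
  -- constraint B in coordinates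
  have hB : ((z.re-1)^2+z.im^2)^2 + (t+2*z.im)^2 = 1 := by
    have h := kd_pow4 (z, t) ((1 : ℂ), (0 : ℝ))
    rw [hd] at h
    rw [abs_pow4] at h
    simp [Complex.sub_re, Complex.sub_im, Complex.mul_im] at h
    linear_combination -h
  -- antipodal distance to the fourth power
  have hE3 : (kd (z, t) ((starRingEnd ℂ) z, -t))^4 = 16*z.im^4 + (2*t+4*z.re*z.im)^2 := by
    rw [kd_pow4, abs_pow4]
    simp [Complex.sub_re, Complex.sub_im, Complex.mul_im, Complex.conj_re, Complex.conj_im]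
    ring
  obtain ⟨hlow, hup⟩ := core_bounds_aux z.re z.im t s hs hs1 hA hB
  have hlow' : 33 - 12*s ≤ (kd (z, t) ((starRingEnd ℂ) z, -t))^4 := by rw [hE3]; exact hlow
  have hup' : (kd (z, t) ((starRingEnd ℂ) z, -t))^4 ≤ 15/4 := by rw [hE3]; exact hup
  have hd0 : 0 ≤ kd (z, t) ((starRingEnd ℂ) z, -t) := kd_nonneg _ _
  refine ⟨⟨hlow', hup'⟩, ⟨?_, ?_⟩, ?_⟩
  · -- (2s-3)^(1/2) ≤ d
    have hb : (0:ℝ) ≤ 2*s - 3 := by linarith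
    have ha4 : ((2*s-3) ^ ((1:ℝ)/2))^4 = 33 - 12*s := by
      rw [← Real.rpow_natCast ((2*s-3) ^ ((1:ℝ)/2)) 4, ← Real.rpow_mul hb]
      norm_num
      push_cast
      nlinarith [hs]
    refine le_of_pow_le_pow_left₀ (n := 4) (by norm_num) hd0 ?_
    rw [ha4]; exact hlow'
  · -- d ≤ (15/4)^(1/4)
    have hc0 : (0:ℝ) ≤ (15/4 : ℝ) ^ ((1:ℝ)/4) := Real.rpow_nonneg (by norm_num) _
    refine le_of_pow_le_pow_left₀ (n := 4) (by norm_num) hc0 ?_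
    have hc4 : ((15/4 : ℝ) ^ ((1:ℝ)/4))^4 = 15/4 := by
      rw [← Real.rpow_natCast ((15/4 : ℝ) ^ ((1:ℝ)/4)) 4, ← Real.rpow_mul (by norm_num : (0:ℝ) ≤ 15/4)]
      norm_num
    rw [hc4]; exact hup'
  · -- 1 < d
    refine lt_of_pow_lt_pow_left₀ 4 hd0 ?_
    have : (1:ℝ)^4 = 1 := by norm_num
    rw [this]
    linarith
end
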